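/- arXiv:1404.7221 — 3 statements merged into one kernel-verified Lean document; each statement's English description precedes it below -/
import Mathlib

section
/- The sequence (-1)^{n+1} B_{2n} · (2π)^{2n} / (2·(2n)!) converges to 1 as n → ∞, where B_{2n} is the 2n-th Bernoulli number. -/
open Filter Real

private lemma tail_bound (n : ℕ) (hn : 1 ≤ n) (k : ℕ) :
    (1 : ℝ) / ((k:ℝ)+2) ^ (2*n) ≤ (1/4) ^ (n-1) * (1 / ((k:ℝ)+2)^2) := by
  have h2n : 2 * n = 2 * (n - 1) + 2 := by omega
  rw [h2n, pow_add, one_div, mul_inv, ← one_div, ← one_div]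
  gcongr
  calc (1:ℝ) / ((k:ℝ)+2) ^ (2*(n-1)) ≤ 1 / (2:ℝ) ^ (2*(n-1)) := by
        gcongr
        all_goals norm_num
      _ = (1/4) ^ (n-1) := by
        rw [div_pow, one_pow, pow_mul]
        norm_num

private lemma zeta_tendsto :
    Tendsto (fun n : ℕ => ∑' k : ℕ, 1 / (k:ℝ) ^ (2*n)) atTop (nhds 1) := by
  have hsum : ∀ n : ℕ, 1 ≤ n → Summable (fun k : ℕ => 1 / (k:ℝ) ^ (2*n)) := by
    intro n hn
    exact Real.summable_one_div_nat_pow.mpr (by omega)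
  have hsum2 : Summable (fun k : ℕ => 1 / ((k:ℝ)+2)^2) := by
    have := (Real.summable_one_div_nat_pow.mpr (le_refl 2)).comp_injective
      (add_right_injective 2)
    simpa [Function.comp_def, add_comm] using this
  set T : ℝ := ∑' k : ℕ, 1 / ((k:ℝ)+2)^2 with hT
  have key : ∀ n : ℕ, 1 ≤ n →
      (∑' k : ℕ, 1 / (k:ℝ) ^ (2*n)) = 1 + ∑' k : ℕ, 1 / ((k:ℝ)+2) ^ (2*n) := by
    intro n hn
    have h := hsum n hn
    have h1 : Summable (fun k : ℕ => 1 / ((k:ℝ)+1) ^ (2*n)) := by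
      have := h.comp_injective (add_right_injective 1)
      simpa [Function.comp_def, add_comm] using this
    rw [Summable.tsum_eq_zero_add h]
    simp only [Nat.cast_add, Nat.cast_one]
    rw [Summable.tsum_eq_zero_add h1]
    simp only [Nat.cast_add, Nat.cast_one, Nat.cast_zero]
    rw [zero_pow (by omega : 2*n ≠ 0)]
    norm_num
    exact tsum_congr fun b => by ring_nf
  have htail : Tendsto (fun n : ℕ => ∑' k : ℕ, 1 / ((k:ℝ)+2) ^ (2*n)) atTop (nhds 0) := by
    apply squeeze_zero' (g := fun n : ℕ => (1/4:ℝ) ^ (n-1) * T)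
    · filter_upwards with n
      exact tsum_nonneg fun k => by positivity
    · filter_upwards [eventually_ge_atTop 1] with n hn
      have hs : Summable (fun k : ℕ => 1 / ((k:ℝ)+2) ^ (2*n)) := by
        have := (hsum n hn).comp_injective (add_right_injective 2)
        simpa [Function.comp_def, add_comm] using this
      rw [hT, ← tsum_mul_left]
      exact Summable.tsum_le_tsum (fun k => tail_bound n hn k) hs (hsum2.mul_left _)
    · have h4 : |(1/4:ℝ)| < 1 := by rw [abs_lt]; constructor <;> norm_num
      have : Tendsto (fun n : ℕ => (1/4:ℝ) ^ n * T) atTop (nhds 0) := by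
        simpa using (tendsto_pow_atTop_nhds_zero_of_abs_lt_one h4).mul_const T
      exact this.comp (tendsto_sub_atTop_nat 1)
  have := htail.const_add 1
  rw [add_zero] at this
  apply this.congr'
  filter_upwards [eventually_ge_atTop 1] with n hn
  exact (key n hn).symm

theorem stmt9 :
    Filter.Tendsto
      (fun n : ℕ => (-1)^(n+1) * (bernoulli (2*n) : ℝ) * (2*Real.pi)^(2*n)
        / (2 * Nat.factorial (2*n)))
      Filter.atTop (nhds 1) := by
  apply zeta_tendsto.congr'
  filter_upwards [eventually_ge_atTop 1] with n hn
  rw [(hasSum_zeta_nat (by omega : n ≠ 0)).tsum_eq]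
  have h2 : (2:ℝ)^(2*n-1) * 2 = 2^(2*n) := by
    rw [← pow_succ]
    congr 1
    omega
  rw [mul_pow, div_eq_div_iff (by positivity) (by positivity)]
  rw [← h2]
  ring
end

section
/- For every integer n ≥ 1, the inequality 4/η(2n+2) - 1/η(2n) > 3 holds, where η is the Dirichlet eta function. -/
/-- The Dirichlet eta function of a real argument s, as an alternating series. -/
noncomputable def realEta (s : ℝ) : ℝ := ∑' n : ℕ, (-1)^n / (n+1 : ℝ)^s

open Finset Filter Real Topology

noncomputable def etaTerm (s : ℝ) : ℕ → ℝ := fun i => (((i : ℝ) + 1) ^ s)⁻¹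

lemma realEta_eq (s : ℝ) : realEta s = ∑' n : ℕ, (-1:ℝ)^n * etaTerm s n := by
  unfold realEta etaTerm
  exact tsum_congr fun n => by rw [div_eq_mul_inv]

lemma etaTerm_antitone (s : ℝ) (hs : 0 ≤ s) : Antitone (etaTerm s) := by
  intro i j hij
  unfold etaTerm
  have h1 : (0:ℝ) < ((i:ℝ)+1) ^ s := Real.rpow_pos_of_pos (by positivity) s
  have h2 : ((i:ℝ)+1) ^ s ≤ ((j:ℝ)+1) ^ s :=
    Real.rpow_le_rpow (by positivity) (by push_cast; linarith [(Nat.cast_le (α := ℝ)).mpr hij]) hs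
  exact inv_anti₀ h1 h2

lemma summable_eta (s : ℝ) (hs : 1 < s) :
    Summable (fun n : ℕ => (-1:ℝ)^n * etaTerm s n) := by
  apply Summable.of_norm
  have : Summable (fun n : ℕ => 1 / ((n:ℝ)+1) ^ s) := by
    have := (Real.summable_one_div_nat_rpow (p := s)).mpr hs
    have h2 := (summable_nat_add_iff 1).mpr this
    refine h2.congr fun n => ?_
    push_cast
    try ring_nf
  refine this.congr fun n => ?_
  simp [etaTerm, norm_mul, abs_of_nonneg (le_of_lt (Real.rpow_pos_of_pos
    (by positivity : (0:ℝ) < (n:ℝ)+1) s)), one_div]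

lemma tendsto_eta (s : ℝ) (hs : 1 < s) :
    Tendsto (fun n => ∑ i ∈ range n, (-1:ℝ)^i * etaTerm s i) atTop (𝓝 (realEta s)) := by
  rw [realEta_eq]
  exact (summable_eta s hs).hasSum.tendsto_sum_nat

lemma eta_lower (s : ℝ) (hs : 1 < s) (k : ℕ) :
    ∑ i ∈ range (2*k), (-1:ℝ)^i * etaTerm s i ≤ realEta s :=
  Antitone.alternating_series_le_tendsto (tendsto_eta s hs) (etaTerm_antitone s (by linarith)) k

lemma eta_upper (s : ℝ) (hs : 1 < s) (k : ℕ) :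
    realEta s ≤ ∑ i ∈ range (2*k+1), (-1:ℝ)^i * etaTerm s i :=
  Antitone.tendsto_le_alternating_series (tendsto_eta s hs) (etaTerm_antitone s (by linarith)) k

lemma hasSum_eta_nat (m : ℕ) (hm : 1 ≤ m) (Z : ℝ)
    (h : HasSum (fun n : ℕ => 1/(n:ℝ)^m) Z) :
    HasSum (fun n : ℕ => (-1:ℝ)^n * etaTerm (m:ℝ) n) ((1 - 2 * (2:ℝ)⁻¹^m) * Z) := by
  have h1 : HasSum (fun n : ℕ => 1/((n:ℝ)+1)^m) Z := by
    have h0 := (hasSum_nat_add_iff' (f := fun n : ℕ => 1/(n:ℝ)^m) 1).mpr h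
    simp only [Finset.range_one, Finset.sum_singleton, Nat.cast_zero,
      zero_pow (by omega : m ≠ 0), div_zero, sub_zero] at h0
    exact h0.congr_fun fun n => by push_cast; norm_num
  have hodd2 : HasSum (fun n : ℕ => if Odd n then 1/((n:ℝ)+1)^m else 0) ((2:ℝ)⁻¹^m * Z) := by
    have hinj : Function.Injective (fun j : ℕ => 2*j+1) := by
      intro a b hab
      have : 2*a+1 = 2*b+1 := hab
      omega
    rw [← Function.Injective.hasSum_iff hinj (by
      intro n hn
      have hno : ¬ Odd n := by
        rintro ⟨j, rfl⟩
        exact hn ⟨j, rfl⟩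
      simp [hno])]
    refine (h1.mul_left ((2:ℝ)⁻¹^m)).congr_fun fun j => ?_
    have ho : Odd (2*j+1) := odd_two_mul_add_one j
    simp only [Function.comp, ho, if_pos]
    push_cast
    rw [show (2*(j:ℝ)+1)+1 = 2*((j:ℝ)+1) by ring, mul_pow]
    rw [div_eq_mul_inv, div_eq_mul_inv, mul_inv, inv_pow]
    ring
  have hfin := h1.sub (hodd2.mul_left 2)
  have hv : (1 - 2 * (2:ℝ)⁻¹^m) * Z = Z - 2 * ((2:ℝ)⁻¹^m * Z) := by ring
  rw [hv]
  refine hfin.congr_fun fun n => ?_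
  rcases Nat.even_or_odd n with he | ho
  · have hno : ¬ Odd n := by simp [Nat.not_odd_iff_even, he]
    simp [hno, he.neg_one_pow, etaTerm, Real.rpow_natCast, one_div]
  · simp only [ho, if_pos, ho.neg_one_pow, etaTerm, Real.rpow_natCast, one_div]
    ring

lemma realEta_two : realEta 2 = Real.pi^2/12 := by
  have h := hasSum_eta_nat 2 (by norm_num) _ hasSum_zeta_two
  have : realEta ((2:ℕ):ℝ) = (1 - 2 * (2:ℝ)⁻¹^2) * (Real.pi^2/6) := by
    rw [realEta_eq]; exact h.tsum_eq
  norm_num at this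
  rw [show ((2:ℝ)) = ((2:ℕ):ℝ) by norm_num] at *
  rw [this]; ring

lemma realEta_four : realEta 4 = 7*Real.pi^4/720 := by
  have h := hasSum_eta_nat 4 (by norm_num) _ hasSum_zeta_four
  have : realEta ((4:ℕ):ℝ) = (1 - 2 * (2:ℝ)⁻¹^4) * (Real.pi^4/90) := by
    rw [realEta_eq]; exact h.tsum_eq
  norm_num at this
  rw [show ((4:ℝ)) = ((4:ℕ):ℝ) by norm_num] at *
  rw [this]; ring

lemma rpow_two_mul (x : ℝ) (hx : 0 ≤ x) (n : ℕ) : x ^ (2*(n:ℝ)) = (x^2)^n := by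
  rw [show 2*(n:ℝ) = ((2*n:ℕ):ℝ) by push_cast; ring, Real.rpow_natCast, pow_mul]

lemma rpow_two_mul_add_two (x : ℝ) (hx : 0 ≤ x) (n : ℕ) :
    x ^ (2*(n:ℝ)+2) = (x^2)^(n+1) := by
  rw [show 2*(n:ℝ)+2 = ((2*(n+1):ℕ):ℝ) by push_cast; ring, Real.rpow_natCast, pow_mul]

lemma keyP_aux (X Y Z : ℝ) (hX : 0 < X) (hY : 0 < Y) (hZ : 0 < Z)
    (hXY : Y ≤ X) (hZY : Z ≤ Y) (hZX2 : Z = X^2) (h256 : 256*Z ≤ 81*Y) :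
    0 < 4*(1-X+Y-Z) - (1-X/4+Y/9) - 3*((1-X+Y-Z)*(1-X/4+Y/9)) := by
  have t1 : 0 ≤ (X-Y)*Y := mul_nonneg (by linarith) hY.le
  have t2 : 0 ≤ X*(Y-Z) := mul_nonneg hX.le (by linarith)
  have t3 : 0 ≤ Y*Z := mul_nonneg hY.le hZ.le
  nlinarith [t1, t2, t3, h256, hY]

lemma key_aux (a b A B : ℝ) (hA : A ≤ a) (hB : b ≤ B) (hApos : 0 ≤ A)
    (h4b : 0 ≤ 4 - 3*b) (hP : 0 < 4*A - B - 3*(A*B)) : 0 < 4*a - b - 3*(a*b) := by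
  nlinarith [mul_nonneg (sub_nonneg.2 hA) h4b,
    mul_nonneg (sub_nonneg.2 hB) (by linarith : (0:ℝ) ≤ 1 + 3*A)]

theorem stmt16 (n : ℕ) (hn : 1 ≤ n) :
    4 / realEta (2*n+2) - 1 / realEta (2*n) > 3 := by
  rcases Nat.lt_or_ge n 2 with h | h
  · -- n = 1
    have hn1 : n = 1 := by omega
    subst hn1
    have e2 : realEta (2*((1:ℕ):ℝ)) = Real.pi^2/12 := by
      rw [show 2*((1:ℕ):ℝ) = 2 by norm_num]; exact realEta_two
    have e4 : realEta (2*((1:ℕ):ℝ)+2) = 7*Real.pi^4/720 := by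
      rw [show 2*((1:ℕ):ℝ)+2 = 4 by norm_num]; exact realEta_four
    rw [e2, e4]
    have hπ : (0:ℝ) < Real.pi := Real.pi_pos
    have hπu : Real.pi < 3.1416 := by linarith [Real.pi_lt_d6]
    have hπl : (3.14:ℝ) < Real.pi := by linarith [Real.pi_gt_d6]
    rw [gt_iff_lt, ← sub_pos]
    have hp2 : Real.pi^2 < 9.8697 := by nlinarith
    have hp4 : Real.pi^4 < 97.42 := by nlinarith
    have key : 2880 - 84*Real.pi^2 - 21*Real.pi^4 > 0 := by nlinarith
    have heq : 4 / (7*Real.pi^4/720) - 1 / (Real.pi^2/12) - 3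
        = (2880 - 84*Real.pi^2 - 21*Real.pi^4) / (7*Real.pi^4) := by
      field_simp
      ring
    rw [heq]
    positivity
  · -- n ≥ 2
    set a := realEta (2*(n:ℝ)) with ha_def
    set b := realEta (2*(n:ℝ)+2) with hb_def
    have hs1 : (1:ℝ) < 2*(n:ℝ) := by
      have : (2:ℝ) ≤ (n:ℝ) := by exact_mod_cast h
      linarith
    have hs2 : (1:ℝ) < 2*(n:ℝ)+2 := by linarith
    set X : ℝ := ((4:ℝ)^n)⁻¹ with hX_def
    set Y : ℝ := ((9:ℝ)^n)⁻¹ with hY_def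
    set Z : ℝ := ((16:ℝ)^n)⁻¹ with hZ_def
    have hXpos : 0 < X := by positivity
    have hYpos : 0 < Y := by positivity
    have hZpos : 0 < Z := by positivity
    -- evaluate partial sums
    have hterm0 : etaTerm (2*(n:ℝ)) 0 = 1 := by
      simp [etaTerm, Real.one_rpow]
    have hterm1 : etaTerm (2*(n:ℝ)) 1 = X := by
      simp only [etaTerm, hX_def]
      norm_num
      rw [rpow_two_mul 2 (by norm_num)]
      norm_num
    have hterm2 : etaTerm (2*(n:ℝ)) 2 = Y := by
      simp only [etaTerm, hY_def]
      norm_num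
      rw [rpow_two_mul 3 (by norm_num)]
      norm_num
    have hterm3 : etaTerm (2*(n:ℝ)) 3 = Z := by
      simp only [etaTerm, hZ_def]
      norm_num
      rw [rpow_two_mul 4 (by norm_num)]
      norm_num
    have hterm0' : etaTerm (2*(n:ℝ)+2) 0 = 1 := by
      simp [etaTerm, Real.one_rpow]
    have hterm1' : etaTerm (2*(n:ℝ)+2) 1 = X/4 := by
      simp only [etaTerm, hX_def]
      norm_num
      rw [rpow_two_mul_add_two 2 (by norm_num)]
      rw [pow_succ]
      norm_num
      ring
    have hterm2' : etaTerm (2*(n:ℝ)+2) 2 = Y/9 := by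
      simp only [etaTerm, hY_def]
      norm_num
      rw [rpow_two_mul_add_two 3 (by norm_num)]
      rw [pow_succ]
      norm_num
      ring
    have hA : 1 - X + Y - Z ≤ a := by
      have := eta_lower (2*(n:ℝ)) hs1 2
      rw [show 2*2 = 4 by norm_num] at this
      simp only [Finset.sum_range_succ, Finset.sum_range_zero] at this
      rw [hterm0, hterm1, hterm2, hterm3] at this
      norm_num at this
      linarith
    have hB : b ≤ 1 - X/4 + Y/9 := by
      have := eta_upper (2*(n:ℝ)+2) hs2 1
      rw [show 2*1+1 = 3 by norm_num] at this
      simp only [Finset.sum_range_succ, Finset.sum_range_zero] at this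
      rw [hterm0', hterm1', hterm2'] at this
      norm_num at this
      linarith
    have hbpos : 0 < b := by
      have := eta_lower (2*(n:ℝ)+2) hs2 1
      rw [show 2*1 = 2 by norm_num] at this
      simp only [Finset.sum_range_succ, Finset.sum_range_zero] at this
      rw [hterm0', hterm1'] at this
      norm_num at this
      have hX1 : X ≤ 1 := by
        rw [hX_def]
        rw [inv_le_one_iff₀]
        right
        exact one_le_pow₀ (by norm_num)
      linarith
    -- numeric facts
    have hXY : Y ≤ X := by
      apply inv_anti₀ (by positivity)
      exact pow_le_pow_left₀ (by norm_num) (by norm_num) n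
    have hZY : Z ≤ Y := by
      apply inv_anti₀ (by positivity)
      exact pow_le_pow_left₀ (by norm_num) (by norm_num) n
    have hZX2 : Z = X^2 := by
      have h16 : ((16:ℝ)^n) = (4^n)^2 := by
        rw [← pow_mul, mul_comm, pow_mul]; norm_num
      rw [hZ_def, h16, hX_def, inv_pow]
    have hX16 : X ≤ 1/16 := by
      have h16 : (16:ℝ) ≤ 4^n := by
        calc (16:ℝ) = 4^2 := by norm_num
        _ ≤ 4^n := pow_le_pow_right₀ (by norm_num) h
      rw [hX_def, show (1:ℝ)/16 = ((16:ℝ))⁻¹ by norm_num]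
      exact inv_anti₀ (by norm_num) h16
    have h256 : 256*Z ≤ 81*Y := by
      rw [hZ_def, hY_def]
      obtain ⟨m, rfl⟩ : ∃ m, n = m + 2 := ⟨n - 2, by omega⟩
      have h916 : (9:ℝ)^m ≤ 16^m := pow_le_pow_left₀ (by norm_num) (by norm_num) m
      have h9 : (0:ℝ) < 9^(m+2) := by positivity
      have h16 : (0:ℝ) < 16^(m+2) := by positivity
      rw [inv_eq_one_div, inv_eq_one_div, mul_one_div, mul_one_div,
        div_le_div_iff₀ h16 h9]
      calc (256:ℝ) * 9^(m+2) = 256 * 81 * 9^m := by rw [pow_add]; ring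
      _ ≤ 256 * 81 * 16^m := by nlinarith
      _ = 81 * 16^(m+2) := by rw [pow_add]; ring
    have hApos : 0 < 1 - X + Y - Z := by linarith
    have hapos : 0 < a := by linarith
    have h4b : 0 < 4 - 3*b := by linarith
    have keyP := keyP_aux X Y Z hXpos hYpos hZpos hXY hZY hZX2 h256
    have key : 0 < 4*a - b - 3*(a*b) :=
      key_aux a b _ _ hA hB hApos.le h4b.le keyP
    rw [gt_iff_lt, ← sub_pos]
    have heq : 4 / b - 1 / a - 3 = (4*a - b - 3*(a*b)) / (a*b) := by
      field_simp
    rw [heq]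
    positivity
end

section
/- The quantity ( (2n+1)!/π^{2n+1} · 1/B⁻ₙ − (2n)!/π^{2n} · 1/B⁺ₙ ) / 2^{2n-1} converges to 1 as n → ∞, where B⁺ₙ = (-1)^{n+1} B_{2n} and B⁻ₙ = (-1)^{n+1} ∫₀¹ B_{2n+1}(x) cot(πx) dx. -/
open Real Filter MeasureTheory intervalIntegral Nat ENNReal


/-- Evaluation of the k-th Bernoulli polynomial at a real number. -/
noncomputable def bernoulliPolyEval (k : ℕ) (t : ℝ) : ℝ :=
  Polynomial.aeval t (Polynomial.bernoulli k)

/-- B⁺ₙ = (-1)^{n+1} B_{2n}. -/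
noncomputable def Bplus (n : ℕ) : ℝ := (-1)^(n+1) * (bernoulli (2*n) : ℝ)

/-- B⁻ₙ = (-1)^{n+1} ∫₀¹ B_{2n+1}(x) cot(πx) dx. -/
noncomputable def Bminus (n : ℕ) : ℝ :=
  (-1)^(n+1) * ∫ x in (0:ℝ)..1, bernoulliPolyEval (2*n+1) x * Real.cot (Real.pi * x)



lemma abs_sin_nat_mul_le (m : ℕ) (θ : ℝ) : |Real.sin (m * θ)| ≤ m * |Real.sin θ| := by
  induction m with
  | zero => simp
  | succ k ih =>
    have : ((k:ℝ)+1) * θ = k * θ + θ := by ring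
    push_cast
    rw [this, Real.sin_add]
    calc |Real.sin (k*θ) * Real.cos θ + Real.cos (k*θ) * Real.sin θ|
        ≤ |Real.sin (k*θ) * Real.cos θ| + |Real.cos (k*θ) * Real.sin θ| := abs_add_le _ _
      _ ≤ |Real.sin (k*θ)| * 1 + 1 * |Real.sin θ| := by
          rw [abs_mul, abs_mul]
          gcongr
          · exact Real.abs_cos_le_one _
          · exact Real.abs_cos_le_one _
      _ ≤ (k:ℝ) * |Real.sin θ| + 1 * |Real.sin θ| := by
          rw [mul_one]; gcongr
      _ = ((k:ℝ)+1) * |Real.sin θ| := by ring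

lemma sin_two_mul_sum (m : ℕ) (θ : ℝ) :
    Real.sin (2*m*θ) = 2 * Real.sin θ * ∑ j ∈ Finset.range m, Real.cos ((2*j+1)*θ) := by
  induction m with
  | zero => simp
  | succ k ih =>
    rw [Finset.sum_range_succ, mul_add, ← ih]
    have h := Real.sin_sub_sin (2*(k+1)*θ) (2*k*θ)
    have e1 : (2*((k:ℝ)+1)*θ + 2*k*θ)/2 = (2*k+1)*θ := by ring
    have e2 : (2*((k:ℝ)+1)*θ - 2*k*θ)/2 = θ := by ring
    rw [e1, e2] at h
    push_cast
    linarith [h]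

lemma sin_cot_eq (m : ℕ) {x : ℝ} (hx : x ∈ Set.Ioo (0:ℝ) 1) :
    Real.sin (2*π*m*x) * Real.cot (π*x) =
      ∑ j ∈ Finset.range m, (Real.cos (2*(j:ℝ)*(π*x)) + Real.cos ((2*(j:ℝ)+2)*(π*x))) := by
  have hs : Real.sin (π*x) ≠ 0 := by
    refine ne_of_gt (Real.sin_pos_of_pos_of_lt_pi (by nlinarith [hx.1, Real.pi_pos]) ?_)
    nlinarith [hx.2, Real.pi_pos]
  rw [Real.cot_eq_cos_div_sin]
  have key : Real.sin (2*π*m*x)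
      = 2 * Real.sin (π*x) * ∑ j ∈ Finset.range m, Real.cos ((2*(j:ℝ)+1)*(π*x)) := by
    have h := sin_two_mul_sum m (π*x)
    have e : 2*π*(m:ℝ)*x = 2*(m:ℝ)*(π*x) := by ring
    rw [e, h]
  rw [key]
  have step1 : 2 * Real.sin (π*x) * (∑ j ∈ Finset.range m, Real.cos ((2*(j:ℝ)+1)*(π*x)))
      * (Real.cos (π*x) / Real.sin (π*x))
      = ∑ j ∈ Finset.range m, 2 * Real.cos ((2*(j:ℝ)+1)*(π*x)) * Real.cos (π*x) := by
    rw [Finset.mul_sum]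
    field_simp
    simp only [Finset.mul_sum, Finset.sum_mul]
    apply Finset.sum_congr rfl
    intro j _
    ring
  rw [step1]
  apply Finset.sum_congr rfl
  intro j _
  have h := Real.cos_add_cos (2*(j:ℝ)*(π*x)) ((2*(j:ℝ)+2)*(π*x))
  have e1 : (2*(j:ℝ)*(π*x) + (2*(j:ℝ)+2)*(π*x))/2 = (2*(j:ℝ)+1)*(π*x) := by ring
  have e2 : (2*(j:ℝ)*(π*x) - (2*(j:ℝ)+2)*(π*x))/2 = -(π*x) := by ring
  rw [e1, e2, Real.cos_neg] at h
  rw [h]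

lemma integral_cos_nat (k : ℕ) :
    ∫ x in (0:ℝ)..1, Real.cos ((k:ℝ)*(π*x)) = if k = 0 then 1 else 0 := by
  rcases Nat.eq_zero_or_pos k with h | h
  · simp [h]
  · have hne : (k:ℝ)*π ≠ 0 := mul_ne_zero (Nat.cast_ne_zero.mpr h.ne') Real.pi_ne_zero
    have e : ∀ x : ℝ, (k:ℝ)*(π*x) = ((k:ℝ)*π)*x := fun x => by ring
    simp_rw [e]
    rw [intervalIntegral.integral_comp_mul_left Real.cos hne]
    rw [if_neg h.ne']
    simp [integral_cos, Real.sin_nat_mul_pi]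

lemma integral_sin_cot {m : ℕ} (hm : m ≠ 0) :
    ∫ x in (0:ℝ)..1, Real.sin (2*π*m*x) * Real.cot (π*x) = 1 := by
  have h1 : ∀ᵐ x : ℝ, x ≠ 1 := by
    rw [ae_iff, show {x:ℝ | ¬ x ≠ 1} = {1} by ext y; simp]
    exact measure_singleton 1
  have hcong : ∫ x in (0:ℝ)..1, Real.sin (2*π*m*x) * Real.cot (π*x)
      = ∫ x in (0:ℝ)..1,
          ∑ j ∈ Finset.range m, (Real.cos (2*(j:ℝ)*(π*x)) + Real.cos ((2*(j:ℝ)+2)*(π*x))) := by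
    apply intervalIntegral.integral_congr_ae
    filter_upwards [h1] with x hx1 hx
    rw [Set.uIoc_of_le (by norm_num : (0:ℝ) ≤ 1)] at hx
    exact sin_cot_eq m ⟨hx.1, lt_of_le_of_ne hx.2 hx1⟩
  rw [hcong, intervalIntegral.integral_finset_sum]
  · have hterm : ∀ j ∈ Finset.range m,
        (∫ x in (0:ℝ)..1, (Real.cos (2*(j:ℝ)*(π*x)) + Real.cos ((2*(j:ℝ)+2)*(π*x))))
        = if j = 0 then 1 else 0 := by
      intro j _
      have i1 : ∫ x in (0:ℝ)..1, Real.cos (2*(j:ℝ)*(π*x)) = if j = 0 then 1 else 0 := by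
        have e : ∀ x : ℝ, 2*(j:ℝ)*(π*x) = ((2*j : ℕ):ℝ)*(π*x) := fun x => by push_cast; ring
        simp_rw [e]
        rw [integral_cos_nat]
        simp
      have i2 : ∫ x in (0:ℝ)..1, Real.cos ((2*(j:ℝ)+2)*(π*x)) = 0 := by
        have e : ∀ x : ℝ, (2*(j:ℝ)+2)*(π*x) = ((2*j+2 : ℕ):ℝ)*(π*x) := fun x => by push_cast; ring
        simp_rw [e]
        rw [integral_cos_nat]
        simp
      rw [intervalIntegral.integral_add, i1, i2, add_zero]
      · exact (Continuous.intervalIntegrable (by fun_prop) _ _)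
      · exact (Continuous.intervalIntegrable (by fun_prop) _ _)
    rw [Finset.sum_congr rfl hterm, Finset.sum_ite_eq' (Finset.range m) 0 (fun _ => (1:ℝ))]
    simp [Nat.pos_of_ne_zero hm]
  · intro j _
    exact (Continuous.intervalIntegrable (by fun_prop) _ _)

lemma bernoulliPolyEval_eq (k : ℕ) (t : ℝ) :
    bernoulliPolyEval k t = (Polynomial.map (algebraMap ℚ ℝ) (Polynomial.bernoulli k)).eval t := by
  rw [bernoulliPolyEval, Polynomial.aeval_def, Polynomial.eval_map]

lemma measurable_cot : Measurable Real.cot := by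
  have : Real.cot = fun x => Real.cos x / Real.sin x := funext fun x => Real.cot_eq_cos_div_sin x
  rw [this]
  exact Real.measurable_cos.div Real.measurable_sin

lemma sin_cot_bound (m : ℕ) (x : ℝ) :
    |Real.sin (2*π*m*x) * Real.cot (π*x)| ≤ 2*m := by
  by_cases hs : Real.sin (π*x) = 0
  · rw [Real.cot_eq_cos_div_sin, hs]
    simp
  · have h1 : |Real.sin (2*π*m*x)| ≤ (2*m) * |Real.sin (π*x)| := by
      have e : 2*π*(m:ℝ)*x = ((2*m : ℕ):ℝ) * (π*x) := by push_cast; ring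
      rw [e]
      have := abs_sin_nat_mul_le (2*m) (π*x)
      push_cast at this ⊢
      exact this
    rw [Real.cot_eq_cos_div_sin, abs_mul, abs_div]
    have hsp : 0 < |Real.sin (π*x)| := abs_pos.mpr hs
    rw [mul_div_assoc'] at *
    rw [div_le_iff₀ hsp]
    calc |Real.sin (2*π*m*x)| * |Real.cos (π*x)|
        ≤ (2*m * |Real.sin (π*x)|) * 1 :=
          mul_le_mul h1 (Real.abs_cos_le_one _) (abs_nonneg _) (by positivity)
      _ = 2*m * |Real.sin (π*x)| := by ring

lemma Bminus_eq (n : ℕ) (hn : n ≠ 0) :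
    Bminus n = 2 * (2*n+1)! / (2*π)^(2*n+1) * (∑' m:ℕ, 1/(m:ℝ)^(2*n+1)) := by
  set C : ℝ := (-1 : ℝ) ^ (n + 1) * (2 * π) ^ (2 * n + 1) / 2 / (2 * n + 1)! with hC
  have hCne : C ≠ 0 := by
    rw [hC]
    apply div_ne_zero (div_ne_zero (mul_ne_zero _ _) two_ne_zero)
    · positivity
    · exact pow_ne_zero _ (neg_ne_zero.mpr one_ne_zero)
    · positivity
  set g : ℕ → ℝ → ℝ := fun m x => (1/(m:ℝ)^(2*n+1) * Real.sin (2*π*m*x)) * Real.cot (π*x)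
    with hg
  -- pointwise identity on Icc 0 1
  have hpt : ∀ x ∈ Set.Icc (0:ℝ) 1,
      bernoulliPolyEval (2*n+1) x * Real.cot (π*x) = C⁻¹ * ∑' m, g m x := by
    intro x hx
    have hsum := hasSum_one_div_nat_pow_mul_sin hn hx
    have htsum : ∑' m : ℕ, 1/(m:ℝ)^(2*n+1) * Real.sin (2*π*m*x)
        = C * bernoulliPolyEval (2*n+1) x := by
      rw [hsum.tsum_eq, bernoulliPolyEval_eq]
    have : ∑' m, g m x = (∑' m : ℕ, 1/(m:ℝ)^(2*n+1) * Real.sin (2*π*m*x)) * Real.cot (π*x) :=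
      tsum_mul_right
    rw [this, htsum]
    field_simp
  -- measurability
  have hmeas : ∀ m : ℕ, AEStronglyMeasurable (g m) (volume.restrict (Set.Ioc (0:ℝ) 1)) := by
    intro m
    apply Measurable.aestronglyMeasurable
    exact ((measurable_const.mul ((Real.measurable_sin).comp (by fun_prop))).mul
      (measurable_cot.comp (by fun_prop)))
  -- bound on lintegrals
  have hbound : ∑' m : ℕ, ∫⁻ x in Set.Ioc (0:ℝ) 1, ‖g m x‖₊ ≠ ⊤ := by
    have hb : ∀ m x, ‖g m x‖ ≤ 2*(m:ℝ)*(1/(m:ℝ)^(2*n+1)) := by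
      intro m x
      have h0 : (0:ℝ) ≤ 1/(m:ℝ)^(2*n+1) := by positivity
      have he : g m x = (1/(m:ℝ)^(2*n+1)) * (Real.sin (2*π*m*x) * Real.cot (π*x)) := by
        rw [hg]; ring
      rw [he, Real.norm_eq_abs, abs_mul, abs_of_nonneg h0]
      calc (1/(m:ℝ)^(2*n+1)) * |Real.sin (2*π*m*x) * Real.cot (π*x)|
          ≤ (1/(m:ℝ)^(2*n+1)) * (2*m) :=
            mul_le_mul_of_nonneg_left (sin_cot_bound m x) h0
        _ = 2*(m:ℝ)*(1/(m:ℝ)^(2*n+1)) := by ring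
    have key : ∀ m : ℕ, ∫⁻ x in Set.Ioc (0:ℝ) 1, ‖g m x‖₊
        ≤ ENNReal.ofReal (2*(m:ℝ)*(1/(m:ℝ)^(2*n+1))) := by
      intro m
      calc ∫⁻ x in Set.Ioc (0:ℝ) 1, (‖g m x‖₊ : ℝ≥0∞)
          ≤ ∫⁻ _ in Set.Ioc (0:ℝ) 1, ENNReal.ofReal (2*(m:ℝ)*(1/(m:ℝ)^(2*n+1))) := by
            apply lintegral_mono
            intro x
            show (‖g m x‖₊ : ℝ≥0∞) ≤ ENNReal.ofReal (2*(m:ℝ)*(1/(m:ℝ)^(2*n+1)))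
            rw [← ENNReal.ofReal_coe_nnreal, coe_nnnorm]
            exact ENNReal.ofReal_le_ofReal (hb m x)
        _ = ENNReal.ofReal (2*(m:ℝ)*(1/(m:ℝ)^(2*n+1))) * volume (Set.Ioc (0:ℝ) 1) :=
            setLIntegral_const _ _
        _ = ENNReal.ofReal (2*(m:ℝ)*(1/(m:ℝ)^(2*n+1))) := by
            rw [Real.volume_Ioc]
            norm_num
    have hsummable : Summable (fun m : ℕ => 2*(m:ℝ)*(1/(m:ℝ)^(2*n+1))) := by
      have : ∀ m : ℕ, 2*(m:ℝ)*(1/(m:ℝ)^(2*n+1)) = 2 * (1/(m:ℝ)^(2*n)) := by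
        intro m
        rcases Nat.eq_zero_or_pos m with h | h
        · subst h; simp [pow_succ, hn]
        · have hm : (m:ℝ) ≠ 0 := Nat.cast_ne_zero.mpr h.ne'
          field_simp
          ring
      rw [funext this]
      exact (Real.summable_one_div_nat_pow.mpr (by omega)).mul_left 2
    refine ne_of_lt (lt_of_le_of_lt (ENNReal.tsum_le_tsum key) ?_)
    rw [← ENNReal.ofReal_tsum_of_nonneg (fun m => by positivity) hsummable]
    exact ENNReal.ofReal_lt_top
  -- the interchange
  have hinter := MeasureTheory.integral_tsum (μ := volume.restrict (Set.Ioc (0:ℝ) 1)) hmeas hbound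
  -- values of individual integrals
  have hval : ∀ m : ℕ, ∫ x in Set.Ioc (0:ℝ) 1, g m x = 1/(m:ℝ)^(2*n+1) := by
    intro m
    rcases Nat.eq_zero_or_pos m with h | h
    · subst h
      simp [hg]
    · rw [← intervalIntegral.integral_of_le (by norm_num : (0:ℝ) ≤ 1)]
      have : ∀ x, g m x = (1/(m:ℝ)^(2*n+1)) * (Real.sin (2*π*m*x) * Real.cot (π*x)) := by
        intro x; rw [hg]; ring
      rw [funext this, intervalIntegral.integral_const_mul, integral_sin_cot h.ne', mul_one]
  -- putting together
  have hint : ∫ x in (0:ℝ)..1, bernoulliPolyEval (2*n+1) x * Real.cot (π*x)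
      = C⁻¹ * ∑' m : ℕ, 1/(m:ℝ)^(2*n+1) := by
    rw [intervalIntegral.integral_of_le (by norm_num : (0:ℝ) ≤ 1)]
    rw [MeasureTheory.setIntegral_congr_fun measurableSet_Ioc
      (fun x hx => hpt x (Set.Ioc_subset_Icc_self hx))]
    rw [MeasureTheory.integral_const_mul, hinter, tsum_congr hval]
  rw [Bminus, hint, hC]
  have hfac : ((2*n+1)! : ℝ) ≠ 0 := by positivity
  have hpi : (2*π)^(2*n+1) ≠ 0 := by positivity
  rcases Nat.even_or_odd (n+1) with h | h
  · rw [h.neg_one_pow]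
    field_simp
  · rw [h.neg_one_pow]
    field_simp

lemma Bplus_eq (n : ℕ) (hn : n ≠ 0) :
    Bplus n = (2*n)! / (2^(2*n-1) * π^(2*n)) * (∑' m:ℕ, 1/(m:ℝ)^(2*n)) := by
  rw [Bplus, (hasSum_zeta_nat hn).tsum_eq]
  have hfac : ((2*n)! : ℝ) ≠ 0 := by positivity
  have hpi : (π:ℝ)^(2*n) ≠ 0 := by positivity
  have h2 : (2:ℝ)^(2*n-1) ≠ 0 := by positivity
  rcases Nat.even_or_odd (n+1) with h | h
  · rw [h.neg_one_pow]
    field_simp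
  · rw [h.neg_one_pow]
    field_simp

lemma one_le_sum_pow {p : ℕ} (hp : 2 ≤ p) : 1 ≤ ∑' m:ℕ, 1/(m:ℝ)^p := by
  have hs : Summable (fun m : ℕ => 1/(m:ℝ)^p) := Real.summable_one_div_nat_pow.mpr (by omega)
  refine le_trans (le_of_eq (by norm_num)) (Summable.le_tsum hs 1 (fun m _ => by positivity))

lemma sum_pow_le {p : ℕ} (hp : 2 ≤ p) :
    ∑' m:ℕ, 1/(m:ℝ)^p ≤ 1 + (1/2:ℝ)^(p-2) * (∑' m:ℕ, 1/((m:ℝ)+2)^2) := by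
  have hs : Summable (fun m : ℕ => 1/(m:ℝ)^p) := Real.summable_one_div_nat_pow.mpr (by omega)
  have hs1 : Summable (fun m : ℕ => 1/((m:ℝ)+1)^p) := by
    have := (summable_nat_add_iff 1).mpr hs
    convert this using 2 with m
    rfl
    push_cast; ring_nf
  have hs2 : Summable (fun m : ℕ => 1/((m:ℝ)+2)^p) := by
    have := (summable_nat_add_iff 2).mpr hs
    convert this using 2 with m
    rfl
    push_cast; ring_nf
  have hK : Summable (fun m : ℕ => 1/((m:ℝ)+2)^2) := by
    have := (summable_nat_add_iff 2).mpr (Real.summable_one_div_nat_pow.mpr (one_lt_two : 1 < 2))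
    convert this using 2 with m
    rfl
    push_cast; ring_nf
  have e0 : ∑' m:ℕ, 1/(m:ℝ)^p = 0 + ∑' m:ℕ, 1/((m:ℝ)+1)^p := by
    rw [Summable.tsum_eq_zero_add hs]
    congr 1
    · rw [Nat.cast_zero, zero_pow (by omega : p ≠ 0), _root_.div_zero]
    · apply tsum_congr; intro m; push_cast; ring_nf
  have e1 : ∑' m:ℕ, 1/((m:ℝ)+1)^p = 1 + ∑' m:ℕ, 1/((m:ℝ)+2)^p := by
    rw [Summable.tsum_eq_zero_add hs1]
    congr 1
    · norm_num
    · apply tsum_congr; intro m; push_cast; ring_nf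
  rw [e0, e1, zero_add]
  refine add_le_add_right ?_ 1
  calc ∑' m:ℕ, 1/((m:ℝ)+2)^p
      ≤ ∑' m:ℕ, (1/2:ℝ)^(p-2) * (1/((m:ℝ)+2)^2) := by
        apply Summable.tsum_le_tsum _ hs2 (hK.mul_left _)
        intro m
        have hm2 : (0:ℝ) < (m:ℝ)+2 := by positivity
        have hb : ((m:ℝ)+2)^2 * 2^(p-2) ≤ ((m:ℝ)+2)^p := by
          calc ((m:ℝ)+2)^2 * 2^(p-2) ≤ ((m:ℝ)+2)^2 * ((m:ℝ)+2)^(p-2) := by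
                gcongr
                all_goals linarith [Nat.cast_nonneg (α := ℝ) m]
            _ = ((m:ℝ)+2)^p := by rw [← pow_add]; congr 1; omega
        have hR : (1/2:ℝ)^(p-2) * (1/((m:ℝ)+2)^2) = 1/(((m:ℝ)+2)^2 * 2^(p-2)) := by
          rw [div_pow, one_pow, _root_.div_mul_div_comm, one_mul, mul_comm ((2:ℝ)^(p-2))]
        rw [hR]
        exact one_div_le_one_div_of_le (by positivity) hb
      _ = (1/2:ℝ)^(p-2) * ∑' m:ℕ, 1/((m:ℝ)+2)^2 := tsum_mul_left

lemma tendsto_sum_pow (a : ℕ → ℕ) (ha : ∀ᶠ n in atTop, 2 ≤ a n) (ha2 : Tendsto a atTop atTop) :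
    Tendsto (fun n => ∑' m:ℕ, 1/(m:ℝ)^(a n)) atTop (nhds 1) := by
  set K := ∑' m:ℕ, 1/((m:ℝ)+2)^2 with hK
  have hzero : Tendsto (fun n => (1/2:ℝ)^(a n - 2) * K) atTop (nhds 0) := by
    have h1 : Tendsto (fun k : ℕ => (1/2:ℝ)^k) atTop (nhds 0) :=
      tendsto_pow_atTop_nhds_zero_of_lt_one (by norm_num) (by norm_num)
    have h2 : Tendsto (fun n => a n - 2) atTop atTop := by
      apply Filter.tendsto_atTop.mpr
      intro b
      filter_upwards [ha2.eventually (Filter.eventually_ge_atTop (b+2))] with n hn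
      omega
    have := (h1.comp h2).mul_const K
    simpa using this
  have hupper : Tendsto (fun n => 1 + (1/2:ℝ)^(a n - 2) * K) atTop (nhds 1) := by
    have := hzero.const_add (1:ℝ)
    simpa using this
  refine tendsto_of_tendsto_of_tendsto_of_le_of_le' tendsto_const_nhds hupper ?_ ?_
  · filter_upwards [ha] with n hn
    exact one_le_sum_pow hn
  · filter_upwards [ha] with n hn
    exact sum_pow_le hn

theorem stmt19 :
    Filter.Tendsto
      (fun n : ℕ =>
        ((Nat.factorial (2*n+1) : ℝ) / Real.pi^(2*n+1) * (1 / Bminus n)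
          - (Nat.factorial (2*n) : ℝ) / Real.pi^(2*n) * (1 / Bplus n)) / 2^(2*n-1))
      Filter.atTop (nhds 1) := by
  have hZ : Tendsto (fun n => ∑' m:ℕ, 1/(m:ℝ)^(2*n+1)) atTop (nhds 1) := by
    apply tendsto_sum_pow
    · filter_upwards [eventually_ge_atTop 1] with n hn; omega
    · exact tendsto_atTop_mono (fun n => by simp only [id_eq]; omega) tendsto_id
  have hW : Tendsto (fun n => ∑' m:ℕ, 1/(m:ℝ)^(2*n)) atTop (nhds 1) := by
    apply tendsto_sum_pow
    · filter_upwards [eventually_ge_atTop 1] with n hn; omega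
    · exact tendsto_atTop_mono (fun n => by simp only [id_eq]; omega) tendsto_id
  have hmain : Tendsto (fun n =>
      2/(∑' m:ℕ, 1/(m:ℝ)^(2*n+1)) - 1/(∑' m:ℕ, 1/(m:ℝ)^(2*n))) atTop (nhds 1) := by
    have h1 := (Filter.Tendsto.div (tendsto_const_nhds (x := (2:ℝ))) hZ one_ne_zero).sub
      (Filter.Tendsto.div (tendsto_const_nhds (x := (1:ℝ))) hW one_ne_zero)
    convert h1 using 2
    all_goals norm_num
  apply hmain.congr'
  filter_upwards [eventually_ge_atTop 1] with n hn
  have hn0 : n ≠ 0 := by omega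
  rw [Bminus_eq n hn0, Bplus_eq n hn0]
  set Z := ∑' m:ℕ, 1/(m:ℝ)^(2*n+1) with hZdef
  set W := ∑' m:ℕ, 1/(m:ℝ)^(2*n) with hWdef
  have hZ1 : 1 ≤ Z := one_le_sum_pow (by omega)
  have hW1 : 1 ≤ W := one_le_sum_pow (by omega)
  have hZ0 : Z ≠ 0 := by linarith
  have hW0 : W ≠ 0 := by linarith
  have hpi : (π:ℝ) ≠ 0 := Real.pi_ne_zero
  have hf1 : ((2*n+1)! : ℝ) ≠ 0 := by positivity
  have hf2 : ((2*n)! : ℝ) ≠ 0 := by positivity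
  obtain ⟨j, hj⟩ : ∃ j, 2*n = j+1 := ⟨2*n-1, by omega⟩
  rw [show 2*n-1 = j from by omega, hj, mul_pow]
  field_simp
  ring
end
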